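/- Let p, d ∈ ℕ, let G ∈ ℝ^{pd×pd} be symmetric and invertible, g ∈ ℝ^{pd×p}, and β := G^{−1}g. Let Ĝ, ĝ satisfy |Ĝ − G|_∞ ≤ δ and |ĝ − g|_∞ ≤ δ for some δ > 0, and let λ ≥ (‖β‖_1 + 1)δ. For each 1 ≤ j ≤ p let β̂_{·j} be a solution of: minimize |m|_1 over m ∈ ℝ^{pd} subject to |Ĝm − ĝ_{·j}|_∞ ≤ λ (the feasible set is nonempty since β_{·j} is feasible). Then: (a) |β̂_{·j}|_1 ≤ |β_{·j}|_1 for every j; (b) max_{1≤j≤p} |β̂_{·j} − β_{·j}|_∞ ≤ 2‖G^{−1}‖_1 λ; and (c) for every ϱ ∈ [0,1), ∑_{j=1}^p |β̂_{·j} − β_{·j}|_1 ≤ 6 s_0(ϱ) (‖G^{−1}‖_1 λ)^{1−ϱ}, where s_0(ϱ) := ∑_{j} ∑_{i} |β_{ij}|^ϱ with the convention 0^0 = 0. -/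

import Mathlib

open Matrix
open scoped Classical

/-- Maximum absolute column-sum norm `‖M‖₁ = max_j ∑_i |M i j|`. -/
noncomputable def colOneNorm {a b : ℕ} (M : Matrix (Fin a) (Fin b) ℝ) : ℝ :=
  ⨆ j : Fin b, ∑ i, |M i j|

lemma colsum_le_colOneNorm {a b : ℕ} (M : Matrix (Fin a) (Fin b) ℝ) (j : Fin b) :
    ∑ i, |M i j| ≤ colOneNorm M := by
  unfold colOneNorm
  exact le_ciSup (f := fun j : Fin b => ∑ i, |M i j|)
    (Set.Finite.bddAbove (Set.finite_range _)) j

lemma colOneNorm_nonneg {a b : ℕ} (M : Matrix (Fin a) (Fin b) ℝ) : 0 ≤ colOneNorm M := by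
  rcases isEmpty_or_nonempty (Fin b) with h | h
  · simp [colOneNorm, Real.iSup_of_isEmpty]
  · obtain ⟨j⟩ := h
    exact le_trans (Finset.sum_nonneg fun i _ => abs_nonneg _) (colsum_le_colOneNorm M j)

/-- Key per-column weak-sparsity bound. -/
lemma key_col {n : ℕ} (b θ : Fin n → ℝ) (ε ϱ : ℝ) (hε : 0 < ε) (hϱ0 : 0 ≤ ϱ) (hϱ1 : ϱ < 1)
    (hθ : ∀ i, |θ i| ≤ 2 * ε) (hm : ∑ i, |b i + θ i| ≤ ∑ i, |b i|) :
    ∑ i, |θ i| ≤ 6 * (∑ i, if b i = 0 then (0 : ℝ) else |b i| ^ ϱ) * ε ^ (1 - ϱ) := by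
  classical
  set S : Finset (Fin n) := Finset.univ.filter (fun i => ε < |b i|) with hSdef
  set E : ℝ := ε ^ (1 - ϱ) with hEdef
  have hE : 0 ≤ E := Real.rpow_nonneg hε.le _
  have hεϱ : (0 : ℝ) < ε ^ ϱ := Real.rpow_pos_of_pos hε _
  set sS : ℝ := ∑ i ∈ S, (if b i = 0 then (0 : ℝ) else |b i| ^ ϱ) with hsS
  set sC : ℝ := ∑ i ∈ Sᶜ, (if b i = 0 then (0 : ℝ) else |b i| ^ ϱ) with hsC
  have hsplit : sS + sC = ∑ i, if b i = 0 then (0 : ℝ) else |b i| ^ ϱ :=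
    Finset.sum_add_sum_compl S _
  have hsS0 : 0 ≤ sS := Finset.sum_nonneg fun i _ => by positivity
  have hsC0 : 0 ≤ sC := Finset.sum_nonneg fun i _ => by positivity
  -- Step A
  have hA : ∑ i ∈ Sᶜ, |θ i| ≤ 2 * ∑ i ∈ Sᶜ, |b i| + ∑ i ∈ S, |θ i| := by
    have h1 : ∑ i ∈ S, (|b i| - |θ i|) + ∑ i ∈ Sᶜ, (|θ i| - |b i|) ≤
        ∑ i ∈ S, |b i| + ∑ i ∈ Sᶜ, |b i| := by
      have e1 : ∑ i ∈ S, (|b i| - |θ i|) ≤ ∑ i ∈ S, |b i + θ i| := by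
        apply Finset.sum_le_sum
        intro i _
        have : |b i| ≤ |b i + θ i| + |θ i| := by
          calc |b i| = |(b i + θ i) + (-θ i)| := by ring_nf
            _ ≤ |b i + θ i| + |(-θ i)| := abs_add_le _ _
            _ = |b i + θ i| + |θ i| := by rw [abs_neg]
        linarith
      have e2 : ∑ i ∈ Sᶜ, (|θ i| - |b i|) ≤ ∑ i ∈ Sᶜ, |b i + θ i| := by
        apply Finset.sum_le_sum
        intro i _
        have : |θ i| ≤ |b i + θ i| + |b i| := by
          calc |θ i| = |(b i + θ i) + (-b i)| := by ring_nf
            _ ≤ |b i + θ i| + |(-b i)| := abs_add_le _ _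
            _ = |b i + θ i| + |b i| := by rw [abs_neg]
        linarith
      have e3 : ∑ i ∈ S, |b i + θ i| + ∑ i ∈ Sᶜ, |b i + θ i| = ∑ i, |b i + θ i| :=
        Finset.sum_add_sum_compl S _
      have e4 : ∑ i ∈ S, |b i| + ∑ i ∈ Sᶜ, |b i| = ∑ i, |b i| :=
        Finset.sum_add_sum_compl S _
      linarith
    have e5 : ∑ i ∈ S, (|b i| - |θ i|) = ∑ i ∈ S, |b i| - ∑ i ∈ S, |θ i| :=
      Finset.sum_sub_distrib _ _
    have e6 : ∑ i ∈ Sᶜ, (|θ i| - |b i|) = ∑ i ∈ Sᶜ, |θ i| - ∑ i ∈ Sᶜ, |b i| :=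
      Finset.sum_sub_distrib _ _
    linarith
  -- Step B : cardinality bound
  have hcard : (S.card : ℝ) * ε ^ ϱ ≤ sS := by
    rw [hsS]
    have : (S.card : ℝ) * ε ^ ϱ = ∑ _i ∈ S, ε ^ ϱ := by
      rw [Finset.sum_const, nsmul_eq_mul]
    rw [this]
    apply Finset.sum_le_sum
    intro i hi
    have hib : ε < |b i| := (Finset.mem_filter.mp hi).2
    have hbne : b i ≠ 0 := by
      intro h; rw [h] at hib; simp at hib; linarith
    rw [if_neg hbne]
    exact Real.rpow_le_rpow hε.le hib.le hϱ0
  have hSθ : ∑ i ∈ S, |θ i| ≤ 2 * ε * S.card := by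
    calc ∑ i ∈ S, |θ i| ≤ ∑ _i ∈ S, 2 * ε := Finset.sum_le_sum fun i _ => hθ i
      _ = 2 * ε * S.card := by rw [Finset.sum_const, nsmul_eq_mul]; ring
  -- Step C : tail bound
  have hC : ∑ i ∈ Sᶜ, |b i| ≤ E * sC := by
    rw [hsC, Finset.mul_sum]
    apply Finset.sum_le_sum
    intro i hi
    have hle : |b i| ≤ ε := by
      have : i ∉ S := Finset.mem_compl.mp hi
      have : ¬ ε < |b i| := fun h => this (Finset.mem_filter.mpr ⟨Finset.mem_univ i, h⟩)
      linarith [not_lt.mp this]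
    by_cases hb0 : b i = 0
    · simp [hb0]
    · rw [if_neg hb0]
      have hpos : 0 < |b i| := abs_pos.mpr hb0
      calc |b i| = |b i| ^ (1 - ϱ) * |b i| ^ ϱ := by
            rw [← Real.rpow_add hpos]
            norm_num
        _ ≤ E * |b i| ^ ϱ := by
            apply mul_le_mul_of_nonneg_right _ (Real.rpow_nonneg hpos.le _)
            exact Real.rpow_le_rpow hpos.le hle (by linarith)
  -- combine
  have hEe : E * ε ^ ϱ = ε := by
    rw [hEdef, ← Real.rpow_add hε]
    norm_num
  have h4 : ε * S.card ≤ E * sS := by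
    have h := mul_le_mul_of_nonneg_left hcard hE
    have h2 : E * ((S.card : ℝ) * ε ^ ϱ) = ε * S.card := by
      rw [show E * ((S.card : ℝ) * ε ^ ϱ) = E * ε ^ ϱ * S.card by ring, hEe]
    linarith
  have htot : ∑ i ∈ S, |θ i| + ∑ i ∈ Sᶜ, |θ i| = ∑ i, |θ i| :=
    Finset.sum_add_sum_compl S _
  have hEsS : E * sS ≤ E * (sS + sC) := mul_le_mul_of_nonneg_left (by linarith) hE
  have hEsC : E * sC ≤ E * (sS + sC) := mul_le_mul_of_nonneg_left (by linarith) hE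
  have : ∑ i, |θ i| ≤ 4 * (E * sS) + 2 * (E * sC) := by linarith
  calc ∑ i, |θ i| ≤ 4 * (E * sS) + 2 * (E * sC) := this
    _ ≤ 4 * (E * (sS + sC)) + 2 * (E * (sS + sC)) := by linarith
    _ = 6 * (sS + sC) * E := by ring
    _ = 6 * (∑ i, if b i = 0 then (0 : ℝ) else |b i| ^ ϱ) * E := by rw [hsplit]

theorem stmt10 (p d : ℕ) (δ lam : ℝ) (hδ : 0 < δ)
    (G : Matrix (Fin (p * d)) (Fin (p * d)) ℝ) (hG : G.IsHermitian) (hGu : IsUnit G)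
    (g β : Matrix (Fin (p * d)) (Fin p) ℝ) (hβ : β = G⁻¹ * g)
    (Ghat : Matrix (Fin (p * d)) (Fin (p * d)) ℝ)
    (ghat : Matrix (Fin (p * d)) (Fin p) ℝ)
    (hGd : ∀ i j, |Ghat i j - G i j| ≤ δ) (hgd : ∀ i j, |ghat i j - g i j| ≤ δ)
    (hlam : (colOneNorm β + 1) * δ ≤ lam)
    (βhat : Matrix (Fin (p * d)) (Fin p) ℝ)
    (hfeas : ∀ j i, |Ghat.mulVec (fun k => βhat k j) i - ghat i j| ≤ lam)
    (hmin : ∀ j (m : Fin (p * d) → ℝ),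
      (∀ i, |Ghat.mulVec m i - ghat i j| ≤ lam) → (∑ i, |βhat i j|) ≤ ∑ i, |m i|) :
    (∀ j, (∑ i, |βhat i j|) ≤ ∑ i, |β i j|) ∧
    (∀ j i, |βhat i j - β i j| ≤ 2 * colOneNorm G⁻¹ * lam) ∧
    (∀ ϱ : ℝ, 0 ≤ ϱ → ϱ < 1 →
      (∑ j, ∑ i, |βhat i j - β i j|) ≤
        6 * (∑ j, ∑ i, if β i j = 0 then (0 : ℝ) else |β i j| ^ ϱ) *
          (colOneNorm G⁻¹ * lam) ^ (1 - ϱ)) := by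
  have hGdet : IsUnit G.det := (Matrix.isUnit_iff_isUnit_det G).mp hGu
  have hGinv : G⁻¹ * G = 1 := Matrix.nonsing_inv_mul G hGdet
  have hGinv' : G * G⁻¹ = 1 := Matrix.mul_nonsing_inv G hGdet
  have hGβ : G * β = g := by rw [hβ, ← Matrix.mul_assoc, hGinv', Matrix.one_mul]
  have hGβ' : ∀ j i, G.mulVec (fun k => β k j) i = g i j := by
    intro j i
    have := congrFun (congrFun hGβ i) j
    simpa [Matrix.mul_apply, Matrix.mulVec, dotProduct] using this
  have hβn : 0 ≤ colOneNorm β := colOneNorm_nonneg β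
  have hlam0 : 0 < lam :=
    lt_of_lt_of_le (by nlinarith) hlam
  -- feasibility of β
  have hfeasβ : ∀ j i, |Ghat.mulVec (fun k => β k j) i - ghat i j| ≤ lam := by
    intro j i
    have e : Ghat.mulVec (fun k => β k j) i - ghat i j =
        (∑ k, (Ghat i k - G i k) * β k j) + (g i j - ghat i j) := by
      rw [← hGβ' j i]
      simp [Matrix.mulVec, dotProduct, sub_mul, Finset.sum_sub_distrib]
    rw [e]
    calc |(∑ k, (Ghat i k - G i k) * β k j) + (g i j - ghat i j)|
        ≤ |∑ k, (Ghat i k - G i k) * β k j| + |g i j - ghat i j| := abs_add_le _ _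
      _ ≤ (∑ k, |(Ghat i k - G i k) * β k j|) + δ := by
          have h1 : |∑ k, (Ghat i k - G i k) * β k j| ≤ ∑ k, |(Ghat i k - G i k) * β k j| :=
            Finset.abs_sum_le_sum_abs _ _
          have h2 : |g i j - ghat i j| ≤ δ := by
            rw [abs_sub_comm]; exact hgd i j
          linarith
      _ ≤ (∑ k, δ * |β k j|) + δ := by
          gcongr with k hk
          rw [abs_mul]
          exact mul_le_mul_of_nonneg_right (hGd i k) (abs_nonneg _)
      _ = δ * (∑ k, |β k j|) + δ := by rw [Finset.mul_sum]
      _ ≤ δ * colOneNorm β + δ := by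
          have := colsum_le_colOneNorm β j
          nlinarith
      _ = (colOneNorm β + 1) * δ := by ring
      _ ≤ lam := hlam
  -- part (a)
  have ha : ∀ j, (∑ i, |βhat i j|) ≤ ∑ i, |β i j| := fun j => hmin j _ (hfeasβ j)
  -- residual bound
  have hres : ∀ j i, |G.mulVec (fun k => βhat k j - β k j) i| ≤ 2 * lam := by
    intro j i
    have e : G.mulVec (fun k => βhat k j - β k j) i =
        (∑ k, (G i k - Ghat i k) * βhat k j) +
          (Ghat.mulVec (fun k => βhat k j) i - ghat i j) + (ghat i j - g i j) := by
      rw [← hGβ' j i]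
      simp [Matrix.mulVec, dotProduct, mul_sub, sub_mul, Finset.sum_sub_distrib]
    rw [e]
    have h1 : |∑ k, (G i k - Ghat i k) * βhat k j| ≤ δ * colOneNorm β := by
      calc |∑ k, (G i k - Ghat i k) * βhat k j|
          ≤ ∑ k, |(G i k - Ghat i k) * βhat k j| := Finset.abs_sum_le_sum_abs _ _
        _ ≤ ∑ k, δ * |βhat k j| := by
            gcongr with k hk
            rw [abs_mul]
            apply mul_le_mul_of_nonneg_right _ (abs_nonneg _)
            rw [abs_sub_comm]; exact hGd i k
        _ = δ * ∑ k, |βhat k j| := by rw [Finset.mul_sum]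
        _ ≤ δ * ∑ k, |β k j| := mul_le_mul_of_nonneg_left (ha j) hδ.le
        _ ≤ δ * colOneNorm β := mul_le_mul_of_nonneg_left (colsum_le_colOneNorm β j) hδ.le
    have h2 : |Ghat.mulVec (fun k => βhat k j) i - ghat i j| ≤ lam := hfeas j i
    have h3 : |ghat i j - g i j| ≤ δ := hgd i j
    calc |(∑ k, (G i k - Ghat i k) * βhat k j) +
          (Ghat.mulVec (fun k => βhat k j) i - ghat i j) + (ghat i j - g i j)|
        ≤ |(∑ k, (G i k - Ghat i k) * βhat k j) +
            (Ghat.mulVec (fun k => βhat k j) i - ghat i j)| + |ghat i j - g i j| := abs_add_le _ _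
      _ ≤ |∑ k, (G i k - Ghat i k) * βhat k j| +
            |Ghat.mulVec (fun k => βhat k j) i - ghat i j| + |ghat i j - g i j| := by
          have := abs_add_le (∑ k, (G i k - Ghat i k) * βhat k j)
            (Ghat.mulVec (fun k => βhat k j) i - ghat i j)
          linarith
      _ ≤ δ * colOneNorm β + lam + δ := by linarith
      _ ≤ 2 * lam := by nlinarith [hlam]
  -- part (b)
  have hsym : ∀ i k, G⁻¹ i k = G⁻¹ k i := by
    intro i k
    have := hG.inv.apply k i
    simpa using this
  have hb : ∀ j i, |βhat i j - β i j| ≤ 2 * colOneNorm G⁻¹ * lam := by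
    intro j i
    have e : βhat i j - β i j = ∑ k, G⁻¹ i k * G.mulVec (fun l => βhat l j - β l j) k := by
      have h1 : G⁻¹ *ᵥ (G *ᵥ (fun l => βhat l j - β l j)) = (fun l => βhat l j - β l j) := by
        rw [Matrix.mulVec_mulVec, hGinv, Matrix.one_mulVec]
      have := congrFun h1 i
      simp only [Matrix.mulVec, dotProduct] at this
      exact this.symm
    rw [e]
    calc |∑ k, G⁻¹ i k * G.mulVec (fun l => βhat l j - β l j) k|
        ≤ ∑ k, |G⁻¹ i k * G.mulVec (fun l => βhat l j - β l j) k| :=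
          Finset.abs_sum_le_sum_abs _ _
      _ ≤ ∑ k, |G⁻¹ i k| * (2 * lam) := by
          gcongr with k hk
          rw [abs_mul]
          exact mul_le_mul_of_nonneg_left (hres j k) (abs_nonneg _)
      _ = (∑ k, |G⁻¹ i k|) * (2 * lam) := by rw [Finset.sum_mul]
      _ = (∑ k, |G⁻¹ k i|) * (2 * lam) := by
          congr 1
          exact Finset.sum_congr rfl fun k _ => by rw [hsym i k]
      _ ≤ colOneNorm G⁻¹ * (2 * lam) := by
          apply mul_le_mul_of_nonneg_right (colsum_le_colOneNorm G⁻¹ i)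
          positivity
      _ = 2 * colOneNorm G⁻¹ * lam := by ring
  refine ⟨ha, hb, ?_⟩
  -- part (c)
  intro ϱ hϱ0 hϱ1
  set ε : ℝ := colOneNorm G⁻¹ * lam with hεdef
  have hε0 : 0 ≤ ε := mul_nonneg (colOneNorm_nonneg _) hlam0.le
  rcases eq_or_lt_of_le hε0 with hε | hε
  · -- ε = 0 : all deviations vanish
    have hz : ∀ j i, |βhat i j - β i j| = 0 := by
      intro j i
      have := hb j i
      have h0 : 2 * colOneNorm G⁻¹ * lam = 0 := by
        rw [mul_assoc, ← hεdef, ← hε, mul_zero]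
      exact le_antisymm (by linarith) (abs_nonneg _)
    have hL : (∑ j, ∑ i, |βhat i j - β i j|) = 0 := by
      apply Finset.sum_eq_zero; intro j _
      apply Finset.sum_eq_zero; intro i _
      exact hz j i
    rw [hL, ← hε, Real.zero_rpow (by linarith : (1 : ℝ) - ϱ ≠ 0), mul_zero]
  · -- ε > 0 : apply key lemma per column
    have hcol : ∀ j, ∑ i, |βhat i j - β i j| ≤
        6 * (∑ i, if β i j = 0 then (0 : ℝ) else |β i j| ^ ϱ) * ε ^ (1 - ϱ) := by
      intro j
      apply key_col (fun i => β i j) (fun i => βhat i j - β i j) ε ϱ hε hϱ0 hϱ1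
      · intro i
        have := hb j i
        rw [hεdef]; linarith
      · have : (fun i => β i j + (βhat i j - β i j)) = fun i => βhat i j := by
          funext i; ring
        simpa [this] using ha j
    calc (∑ j, ∑ i, |βhat i j - β i j|)
        ≤ ∑ j, 6 * (∑ i, if β i j = 0 then (0 : ℝ) else |β i j| ^ ϱ) * ε ^ (1 - ϱ) :=
          Finset.sum_le_sum fun j _ => hcol j
      _ = 6 * (∑ j, ∑ i, if β i j = 0 then (0 : ℝ) else |β i j| ^ ϱ) * ε ^ (1 - ϱ) := by
          rw [← Finset.sum_mul, ← Finset.mul_sum]
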